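/- arXiv:1503.04895 — 3 statements merged into one kernel-verified Lean document; each statement's English description precedes it below -/
import Mathlib

section
/- Let d ≥ 3, M ≥ 1, and N_M = d + d(d-1) + ⋯ + d(d-1)^{M-1} = d((d-1)^M - 1)/(d-2). If nonnegative real numbers b, w, g satisfy g ≤ N_M · w and d·b + (d-2)·g ≥ (d - 2 - (3d-8)/(3N_M+4))·(w + b + g), and w + b > 0, then b/(b+w) ≥ 1/4. -/
/-- Arithmetic core of the black-vertex counting argument. -/
theorem stmt_0 (d M : ℕ) (hd : 3 ≤ d) (hM : 1 ≤ M)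
    (NM : ℝ) (hNM : NM = ∑ i ∈ Finset.range M, (d : ℝ) * ((d : ℝ) - 1) ^ i)
    (b w g : ℝ) (hb : 0 ≤ b) (hw : 0 ≤ w) (hg : 0 ≤ g)
    (h1 : g ≤ NM * w)
    (h2 : (d : ℝ) * b + ((d : ℝ) - 2) * g ≥
      ((d : ℝ) - 2 - (3 * (d : ℝ) - 8) / (3 * NM + 4)) * (w + b + g))
    (hpos : 0 < w + b) :
    b / (b + w) ≥ 1 / 4 := by
  have hD : (3 : ℝ) ≤ (d : ℝ) := by exact_mod_cast hd
  have hNM0 : 0 ≤ NM := by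
    rw [hNM]
    apply Finset.sum_nonneg
    intro i _
    have : (0:ℝ) ≤ ((d:ℝ) - 1) ^ i := pow_nonneg (by linarith) i
    nlinarith
  have hden : (0:ℝ) < 3 * NM + 4 := by linarith
  have hne : (3 * NM + 4 : ℝ) ≠ 0 := ne_of_gt hden
  have h2' : (((d:ℝ) - 2) * (3 * NM + 4) - (3 * (d:ℝ) - 8)) * (w + b + g) ≤
      ((d : ℝ) * b + ((d : ℝ) - 2) * g) * (3 * NM + 4) := by
    have h := mul_le_mul_of_nonneg_right h2 hden.le
    calc (((d:ℝ) - 2) * (3 * NM + 4) - (3 * (d:ℝ) - 8)) * (w + b + g)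
        = ((d : ℝ) - 2 - (3 * (d : ℝ) - 8) / (3 * NM + 4)) * (w + b + g) * (3 * NM + 4) := by
          field_simp
      _ ≤ ((d : ℝ) * b + ((d : ℝ) - 2) * g) * (3 * NM + 4) := h
  have h3b : w ≤ 3 * b := by
    have hg1 : (3 * (d:ℝ) - 8) * g ≤ (3 * (d:ℝ) - 8) * (NM * w) :=
      mul_le_mul_of_nonneg_left h1 (by linarith)
    nlinarith [mul_nonneg hNM0 hw, mul_nonneg hNM0 hb, mul_nonneg hNM0 hg]
  rw [ge_iff_le, le_div_iff₀ (by linarith : (0:ℝ) < b + w)]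
  linarith
end

section
/- Let G be a finite graph with n vertices, maximum degree d, and vertex isoperimetric constant at least h > 0. If S ⊆ V(G) satisfies n/2 ≤ |S| < ((d+2h)/(2d+2h))·n, then the 1-neighborhood S₁ of S satisfies |S₁| ≥ |S| + (h/d)·|Sᶜ| ≥ ((d+2h)/(2d+2h))·n. -/
open Classical in
/-- One expansion step for a set of size between n/2 and ((d+2h)/(2d+2h))n. -/
theorem stmt_3 {V : Type*} [Fintype V] (G : SimpleGraph V)
    (n : ℕ) (hn : Fintype.card V = n)
    (d : ℕ) (hd : 0 < d) (hdeg : ∀ v, G.degree v ≤ d)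
    (h : ℝ) (hh : 0 < h)
    (hiso : ∀ T : Finset V, (T.card : ℝ) ≤ n / 2 →
      h * T.card ≤ ((Finset.univ.filter fun v =>
        v ∉ T ∧ ∃ u ∈ T, G.Adj u v).card : ℝ))
    (S : Finset V)
    (hS1 : (n : ℝ) / 2 ≤ S.card)
    (hS2 : (S.card : ℝ) < ((d + 2 * h) / (2 * d + 2 * h)) * n)
    (S₁ : Finset V)
    (hS₁ : S₁ = S ∪ Finset.univ.filter fun v => ∃ u ∈ S, G.Adj u v) :
    (S.card : ℝ) + (h / d) * Sᶜ.card ≤ (S₁.card : ℝ) ∧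
      ((d + 2 * h) / (2 * d + 2 * h)) * n ≤ (S₁.card : ℝ) := by
  classical
  set A : Finset V := Finset.univ.filter (fun v => v ∉ S ∧ ∃ u ∈ S, G.Adj u v) with hA
  set B : Finset V := Finset.univ.filter (fun v => v ∉ Sᶜ ∧ ∃ u ∈ Sᶜ, G.Adj u v) with hB
  have hSn : S.card ≤ n := hn ▸ Finset.card_le_univ S
  have hcardSc : (Sᶜ.card : ℝ) = n - S.card := by
    rw [Finset.card_compl, hn]
    push_cast [Nat.cast_sub hSn]
    ring
  have hScle : (Sᶜ.card : ℝ) ≤ n / 2 := by rw [hcardSc]; linarith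
  have h1 := hiso Sᶜ hScle
  -- counting: B ⊆ biUnion over A of neighborhoods
  have hBsub : B ⊆ A.biUnion (fun u => G.neighborFinset u) := by
    intro v hv
    rw [hB, Finset.mem_filter] at hv
    obtain ⟨-, hvS, u, huSc, hadj⟩ := hv
    rw [Finset.mem_compl] at huSc
    rw [Finset.notMem_compl] at hvS
    refine Finset.mem_biUnion.2 ⟨u, ?_, ?_⟩
    · rw [hA, Finset.mem_filter]
      exact ⟨Finset.mem_univ u, huSc, v, hvS, hadj.symm⟩
    · rw [SimpleGraph.mem_neighborFinset]; exact hadj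
  have hBA : B.card ≤ d * A.card := by
    calc B.card ≤ (A.biUnion (fun u => G.neighborFinset u)).card :=
          Finset.card_le_card hBsub
      _ ≤ ∑ u ∈ A, (G.neighborFinset u).card := Finset.card_biUnion_le
      _ ≤ ∑ u ∈ A, d := Finset.sum_le_sum (fun u _ => hdeg u)
      _ = d * A.card := by rw [Finset.sum_const, smul_eq_mul, mul_comm]
  -- S₁ = S ∪ A disjointly
  have hS₁' : S₁ = S ∪ A := by
    rw [hS₁, hA]
    ext v
    simp only [Finset.mem_union, Finset.mem_filter, Finset.mem_univ, true_and]
    tauto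
  have hdisj : Disjoint S A := by
    rw [Finset.disjoint_left]
    intro v hvS hvA
    rw [hA, Finset.mem_filter] at hvA
    exact hvA.2.1 hvS
  have hS₁card : S₁.card = S.card + A.card := by
    rw [hS₁', Finset.card_union_of_disjoint hdisj]
  have hd' : (0:ℝ) < d := by exact_mod_cast hd
  -- h * |Sᶜ| ≤ |B| ≤ d * |A|
  have hkey : h * Sᶜ.card ≤ (d : ℝ) * A.card := by
    refine h1.trans ?_
    have : (B.card : ℝ) ≤ (d : ℝ) * A.card := by exact_mod_cast hBA
    exact this
  have hAcard : (h / d) * Sᶜ.card ≤ (A.card : ℝ) := by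
    rw [div_mul_eq_mul_div, div_le_iff₀ hd']
    nlinarith [hkey]
  have hfirst : (S.card : ℝ) + (h / d) * Sᶜ.card ≤ (S₁.card : ℝ) := by
    rw [hS₁card]
    push_cast
    linarith
  refine ⟨hfirst, ?_⟩
  have hscle : (S.card : ℝ) ≤ n := by exact_mod_cast hSn
  have htarget : ((d + 2 * h) / (2 * d + 2 * h)) * n ≤ (S.card : ℝ) + (h / d) * Sᶜ.card := by
    rw [hcardSc, div_mul_eq_mul_div, div_le_iff₀ (by positivity), div_mul_eq_mul_div,
      ← sub_nonneg]
    have e : ((S.card:ℝ) + h * ((n:ℝ) - S.card) / d) * (2 * d + 2 * h) - (d + 2*h) * n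
        = ((d:ℝ)^2 * (2 * S.card - n) + 2 * h^2 * ((n:ℝ) - S.card)) / d := by
      field_simp
      ring
    rw [e]
    apply div_nonneg _ hd'.le
    nlinarith [hscle, hS1]
  linarith
end

section
/- Let G be a graph on n vertices, and suppose every vertex set U with |U| ≤ εn and all M-neighborhoods tree-like contains at least |U|/4 'black' vertices (vertices with a free branch of depth 2M). Suppose distinct black vertices v_1, …, v_k of U are each assigned the subgraph consisting of v_i together with its free branch of depth M inside its free branch of depth 2M. Then these k subgraphs are pairwise vertex-disjoint, and each is isomorphic as a graph to Δ_M (the rooted (d−1)-ary tree of depth M with root of degree 1). -/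
/-- Vertices of Δ_M, the tree obtained from the infinite d-regular tree by
severing d-1 edges at the root and keeping the depth-M neighborhood of the root:
`none` is the root O (of degree 1), and `some l` encodes the vertex reached from
the unique child of the root by following the sequence of choices `l`
(so internal vertices have degree d, i.e. d-1 children). -/
def DeltaVert (d M : ℕ) : Type :=
  Option {l : List (Fin (d - 1)) // l.length ≤ M - 1}

/-- The graph Δ_M: the root is joined to the empty sequence, and a sequence is
joined to each of its one-step extensions. -/
def DeltaGraph (d M : ℕ) : SimpleGraph (DeltaVert d M) :=
  SimpleGraph.fromRel (fun x y =>
    (x = none ∧ ∃ h, y = some ⟨[], h⟩) ∨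
    (∃ (a : Fin (d - 1)) (l : List (Fin (d - 1))) (h1 : l.length ≤ M - 1)
        (h2 : (a :: l).length ≤ M - 1),
      x = some ⟨l, h1⟩ ∧ y = some ⟨a :: l, h2⟩))

open SimpleGraph

namespace Stmt18Aux

variable {V : Type*} {G : SimpleGraph V}

/-- Transfer a walk whose support lies in `s` to the induced graph on `s`. -/
def toInduce {s : Set V} : ∀ {x y : V} (p : G.Walk x y) (hs : ∀ z ∈ p.support, z ∈ s),
    (G.induce s).Walk ⟨x, hs x p.start_mem_support⟩ ⟨y, hs y p.end_mem_support⟩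
  | _, _, SimpleGraph.Walk.nil, _ => SimpleGraph.Walk.nil
  | x, y, SimpleGraph.Walk.cons h p, hs =>
      SimpleGraph.Walk.cons (by exact h) (toInduce p (fun z hz => hs z (by simp [hz])))

lemma support_toInduce {s : Set V} : ∀ {x y : V} (p : G.Walk x y)
    (hs : ∀ z ∈ p.support, z ∈ s),
    (toInduce p hs).support.map Subtype.val = p.support
  | _, _, SimpleGraph.Walk.nil, _ => by simp [toInduce]
  | x, y, SimpleGraph.Walk.cons h p, hs => by
      simp only [toInduce]; exact congrArg (x :: ·) (support_toInduce p _)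

lemma length_toInduce {s : Set V} : ∀ {x y : V} (p : G.Walk x y)
    (hs : ∀ z ∈ p.support, z ∈ s),
    (toInduce p hs).length = p.length
  | _, _, SimpleGraph.Walk.nil, _ => by simp [toInduce]
  | x, y, SimpleGraph.Walk.cons h p, hs => by
      simp only [toInduce]; exact congrArg (· + 1) (length_toInduce p _)

lemma isPath_toInduce {s : Set V} {x y : V} {p : G.Walk x y}
    (hp : p.IsPath) (hs : ∀ z ∈ p.support, z ∈ s) : (toInduce p hs).IsPath := by
  rw [SimpleGraph.Walk.isPath_def]
  have h2 : ((toInduce p hs).support.map Subtype.val).Nodup := by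
    rw [support_toInduce]; exact hp.support_nodup
  exact h2.of_map _

/-- In a set whose induced graph is acyclic, two paths between the same endpoints
have the same support. -/
lemma support_eq_of_isAcyclic {s : Set V} (hT : (G.induce s).IsAcyclic)
    {x y : V} {p q : G.Walk x y} (hp : p.IsPath) (hq : q.IsPath)
    (hps : ∀ z ∈ p.support, z ∈ s) (hqs : ∀ z ∈ q.support, z ∈ s) :
    p.support = q.support := by
  have := hT.path_unique ⟨toInduce p hps, isPath_toInduce hp hps⟩
    ⟨toInduce q hqs, isPath_toInduce hq hqs⟩
  have h2 : (toInduce p hps) = (toInduce q hqs) := congrArg Subtype.val this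
  calc p.support = (toInduce p hps).support.map Subtype.val := (support_toInduce p hps).symm
    _ = (toInduce q hqs).support.map Subtype.val := by rw [h2]
    _ = q.support := support_toInduce q hqs

lemma length_eq_of_isAcyclic {s : Set V} (hT : (G.induce s).IsAcyclic)
    {x y : V} {p q : G.Walk x y} (hp : p.IsPath) (hq : q.IsPath)
    (hps : ∀ z ∈ p.support, z ∈ s) (hqs : ∀ z ∈ q.support, z ∈ s) :
    p.length = q.length := by
  have h := support_eq_of_isAcyclic hT hp hq hps hqs
  have := congrArg List.length h
  rwa [SimpleGraph.Walk.length_support, SimpleGraph.Walk.length_support,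
    Nat.add_right_cancel_iff] at this

/-- Distances along a geodesic sum correctly. -/
lemma dist_add_dist_of_mem_support (hconn : G.Connected) {x y z : V}
    {p : G.Walk x y} (hp : p.length = G.dist x y) (hz : z ∈ p.support) :
    G.dist x z + G.dist z y = G.dist x y := by
  classical
  have h1 : G.dist x z ≤ (p.takeUntil z hz).length := SimpleGraph.dist_le _
  have h2 : G.dist z y ≤ (p.dropUntil z hz).length := SimpleGraph.dist_le _
  have h3 : (p.takeUntil z hz).length + (p.dropUntil z hz).length = p.length := by
    rw [← SimpleGraph.Walk.length_append, SimpleGraph.Walk.take_spec]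
  have h4 := hconn.dist_triangle (u := x) (v := z) (w := y)
  omega


section Ball
variable (hconn : G.Connected) {c : V} {R : ℕ}
  (hT : (G.induce {x : V | G.dist c x ≤ R}).IsAcyclic)

include hconn

/-- Support of a geodesic from `c` stays in the ball. -/
lemma geo_support_mem {y : V} {p : G.Walk c y} (hp : p.length = G.dist c y)
    (hy : G.dist c y ≤ R) : ∀ z ∈ p.support, z ∈ {x : V | G.dist c x ≤ R} := by
  intro z hz
  have := dist_add_dist_of_mem_support hconn hp hz
  simp only [Set.mem_setOf_eq]
  omega

include hT

/-- No two vertices at the same distance from the centre of an acyclic ball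
are adjacent. -/
lemma no_horizontal {y z : V} (hadj : G.Adj y z) (hyz : G.dist c y = G.dist c z)
    (hy : G.dist c y ≤ R) : False := by
  obtain ⟨p, hpp, hp⟩ := hconn.exists_path_of_dist c y
  obtain ⟨q, hqq, hq⟩ := hconn.exists_path_of_dist c z
  have hzy : z ∉ p.support := by
    intro hmem
    have h1 := dist_add_dist_of_mem_support hconn hp hmem
    have h2 : G.dist z y = 0 := by omega
    have := (hconn z y).dist_eq_zero_iff.mp h2
    exact hadj.ne this.symm
  -- two distinct paths from z to c
  have hP1 : (SimpleGraph.Walk.cons hadj.symm p.reverse).IsPath := by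
    rw [SimpleGraph.Walk.cons_isPath_iff]
    refine ⟨hpp.reverse, ?_⟩
    rwa [SimpleGraph.Walk.support_reverse, List.mem_reverse]
  have hP2 : q.reverse.IsPath := hqq.reverse
  have hsup1 : ∀ w ∈ (SimpleGraph.Walk.cons hadj.symm p.reverse).support,
      w ∈ {x : V | G.dist c x ≤ R} := by
    intro w hw
    rw [SimpleGraph.Walk.support_cons] at hw
    rcases List.mem_cons.mp hw with rfl | hw
    · simp only [Set.mem_setOf_eq]; omega
    · rw [SimpleGraph.Walk.support_reverse, List.mem_reverse] at hw
      exact geo_support_mem hconn hp hy w hw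
  have hsup2 : ∀ w ∈ q.reverse.support, w ∈ {x : V | G.dist c x ≤ R} := by
    intro w hw
    rw [SimpleGraph.Walk.support_reverse, List.mem_reverse] at hw
    exact geo_support_mem hconn hq (by omega) w hw
  have hlen := length_eq_of_isAcyclic hT hP1 hP2 hsup1 hsup2
  rw [SimpleGraph.Walk.length_cons, SimpleGraph.Walk.length_reverse,
    SimpleGraph.Walk.length_reverse] at hlen
  omega

/-- Uniqueness of the parent in an acyclic ball. -/
lemma unique_parent {y z₁ z₂ : V} (h1 : G.Adj z₁ y) (h2 : G.Adj z₂ y)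
    (hd1 : G.dist c z₁ + 1 = G.dist c y) (hd2 : G.dist c z₂ + 1 = G.dist c y)
    (hy : G.dist c y ≤ R) : z₁ = z₂ := by
  by_contra hne
  obtain ⟨p, hpp, hp⟩ := hconn.exists_path_of_dist c z₁
  obtain ⟨q, hqq, hq⟩ := hconn.exists_path_of_dist c z₂
  have hyp : y ∉ p.support := by
    intro hmem
    have h1 := dist_add_dist_of_mem_support hconn hp hmem
    have h4 := hconn.dist_triangle (u := c) (v := y) (w := z₁)
    omega
  have hyq : y ∉ q.support := by
    intro hmem
    have h1 := dist_add_dist_of_mem_support hconn hq hmem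
    have h4 := hconn.dist_triangle (u := c) (v := y) (w := z₂)
    omega
  have hP1 : (SimpleGraph.Walk.cons h1.symm p.reverse).IsPath := by
    rw [SimpleGraph.Walk.cons_isPath_iff]
    exact ⟨hpp.reverse, by rwa [SimpleGraph.Walk.support_reverse, List.mem_reverse]⟩
  have hP2 : (SimpleGraph.Walk.cons h2.symm q.reverse).IsPath := by
    rw [SimpleGraph.Walk.cons_isPath_iff]
    exact ⟨hqq.reverse, by rwa [SimpleGraph.Walk.support_reverse, List.mem_reverse]⟩
  have hsup1 : ∀ w ∈ (SimpleGraph.Walk.cons h1.symm p.reverse).support,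
      w ∈ {x : V | G.dist c x ≤ R} := by
    intro w hw
    rw [SimpleGraph.Walk.support_cons] at hw
    rcases List.mem_cons.mp hw with rfl | hw
    · simpa using hy
    · rw [SimpleGraph.Walk.support_reverse, List.mem_reverse] at hw
      exact geo_support_mem hconn hp (by omega) w hw
  have hsup2 : ∀ w ∈ (SimpleGraph.Walk.cons h2.symm q.reverse).support,
      w ∈ {x : V | G.dist c x ≤ R} := by
    intro w hw
    rw [SimpleGraph.Walk.support_cons] at hw
    rcases List.mem_cons.mp hw with rfl | hw
    · simpa using hy
    · rw [SimpleGraph.Walk.support_reverse, List.mem_reverse] at hw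
      exact geo_support_mem hconn hq (by omega) w hw
  have hsupeq := support_eq_of_isAcyclic hT hP1 hP2 hsup1 hsup2
  have hz1 : z₁ ∈ (SimpleGraph.Walk.cons h2.symm q.reverse).support := by
    rw [← hsupeq, SimpleGraph.Walk.support_cons]
    refine List.mem_cons.mpr (Or.inr ?_)
    rw [SimpleGraph.Walk.support_reverse, List.mem_reverse]
    exact p.end_mem_support
  rw [SimpleGraph.Walk.support_cons] at hz1
  rcases List.mem_cons.mp hz1 with rfl | hz1
  · omega
  · rw [SimpleGraph.Walk.support_reverse, List.mem_reverse] at hz1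
    have hsum := dist_add_dist_of_mem_support hconn hq hz1
    have hz12 : G.dist z₁ z₂ = 0 := by omega
    exact hne ((hconn z₁ z₂).dist_eq_zero_iff.mp hz12)

end Ball

section Parent
variable (hconn : G.Connected)
include hconn

/-- Every vertex at positive distance from `c` has a neighbour one step closer. -/
lemma parent_exists {c y : V} (h1 : 1 ≤ G.dist c y) :
    ∃ z, G.Adj y z ∧ G.dist c z + 1 = G.dist c y := by
  obtain ⟨p, hp⟩ := hconn.exists_walk_length_eq_dist c y
  obtain ⟨q, hq⟩ : ∃ q : G.Walk y c, q.length = G.dist c y :=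
    ⟨p.reverse, by rw [SimpleGraph.Walk.length_reverse, hp]⟩
  cases q with
  | nil => rw [← hq] at h1; simp at h1
  | cons hadj r =>
      rename_i w
      refine ⟨w, hadj, ?_⟩
      rw [SimpleGraph.Walk.length_cons] at hq
      have hle : G.dist c w ≤ r.length := by
        have := SimpleGraph.dist_le r.reverse
        rwa [SimpleGraph.Walk.length_reverse] at this
      have htri : G.dist c y ≤ G.dist c w + 1 := by
        have h2 : G.dist w y = 1 := SimpleGraph.dist_eq_one_iff_adj.mpr hadj.symm
        have := hconn.dist_triangle (u := c) (v := w) (w := y)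
        omega
      omega

end Parent

section Children

open Classical in
/-- The set of neighbours of `x` one step further from `c`. -/
noncomputable def children [Fintype V] (G : SimpleGraph V) (c x : V) : Finset V :=
  Finset.univ.filter (fun z => G.Adj x z ∧ G.dist c z = G.dist c x + 1)

open Classical in
lemma mem_children [Fintype V] {c x z : V} :
    z ∈ children G c x ↔ G.Adj x z ∧ G.dist c z = G.dist c x + 1 := by
  simp [children]

open Classical in
/-- In an acyclic ball around `c`, every vertex `y` distinct from `c` (and not
too deep) has exactly `d - 1` children. -/
lemma card_children [Fintype V] {d R : ℕ} (hconn : G.Connected)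
    (hreg : G.IsRegularOfDegree d) {c y : V}
    (hT : (G.induce {x : V | G.dist c x ≤ R}).IsAcyclic)
    (h1 : 1 ≤ G.dist c y) (hR : G.dist c y ≤ R) :
    (children G c y).card = d - 1 := by
  classical
  set t := G.dist c y with htdef
  have hdeg : (G.neighborFinset y).card = d := hreg y
  -- the parent
  obtain ⟨z₀, hz₀adj, hz₀⟩ := parent_exists hconn h1
  have hsplit := Finset.card_filter_add_card_filter_not
    (s := G.neighborFinset y) (p := fun z => G.dist c z = t + 1)
  have hchild : (G.neighborFinset y).filter (fun z => G.dist c z = t + 1)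
      = children G c y := by
    ext z
    rw [Finset.mem_filter, SimpleGraph.mem_neighborFinset, mem_children]
  have hpar : (G.neighborFinset y).filter (fun z => ¬ G.dist c z = t + 1) = {z₀} := by
    ext z
    simp only [Finset.mem_filter, SimpleGraph.mem_neighborFinset, Finset.mem_singleton]
    constructor
    · rintro ⟨hadj, hne⟩
      have hb1 : G.dist c z ≤ t + 1 := by
        have h2 : G.dist y z = 1 := SimpleGraph.dist_eq_one_iff_adj.mpr hadj
        have := hconn.dist_triangle (u := c) (v := y) (w := z)
        omega
      have hb2 : t ≤ G.dist c z + 1 := by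
        have h2 : G.dist z y = 1 := SimpleGraph.dist_eq_one_iff_adj.mpr hadj.symm
        have := hconn.dist_triangle (u := c) (v := z) (w := y)
        omega
      have hne2 : G.dist c z ≠ t := by
        intro heq
        exact no_horizontal hconn hT hadj.symm (by omega) (by omega)
      have : G.dist c z + 1 = t := by omega
      exact unique_parent hconn hT hadj.symm hz₀adj.symm this hz₀ hR
    · rintro rfl
      exact ⟨hz₀adj, by omega⟩
  rw [hchild, hpar] at hsplit
  simp only [Finset.card_singleton] at hsplit
  omega

open Classical in
/-- A fixed enumeration of the children of a vertex. -/
noncomputable def ce [Fintype V] (G : SimpleGraph V) (d : ℕ) (c x : V)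
    (a : Fin (d - 1)) : V :=
  if h : Fintype.card (children G c x : Finset V) = d - 1 then
    ((Fintype.equivFinOfCardEq h).symm a : V)
  else x

open Classical in
lemma ce_mem_children [Fintype V] {d : ℕ} {c x : V}
    (h : (children G c x).card = d - 1) (a : Fin (d - 1)) :
    ce G d c x a ∈ children G c x := by
  rw [ce, dif_pos (by rwa [Fintype.card_coe])]
  exact Subtype.mem _

open Classical in
lemma ce_inj [Fintype V] {d : ℕ} {c x : V}
    (h : (children G c x).card = d - 1) {a₁ a₂ : Fin (d - 1)}
    (heq : ce G d c x a₁ = ce G d c x a₂) : a₁ = a₂ := by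
  rw [ce, ce, dif_pos (by rwa [Fintype.card_coe]), dif_pos (by rwa [Fintype.card_coe])] at heq
  have := (Fintype.equivFinOfCardEq (α := (children G c x : Finset V))
      (by rwa [Fintype.card_coe])).symm.injective (Subtype.ext heq)
  exact this

open Classical in
lemma ce_surj [Fintype V] {d : ℕ} {c x z : V}
    (h : (children G c x).card = d - 1) (hz : z ∈ children G c x) :
    ∃ a : Fin (d - 1), ce G d c x a = z := by
  have hcard : Fintype.card (children G c x : Finset V) = d - 1 := by
    rwa [Fintype.card_coe]
  refine ⟨Fintype.equivFinOfCardEq hcard ⟨z, hz⟩, ?_⟩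
  rw [ce, dif_pos hcard, Equiv.symm_apply_apply]

/-- Descend from `bb` following the list of choices (read from the tail). -/
noncomputable def fdesc [Fintype V] (G : SimpleGraph V) (d : ℕ) (c bb : V) :
    List (Fin (d - 1)) → V
  | [] => bb
  | a :: l => ce G d c (fdesc G d c bb l) a

end Children

section Branch

variable [Fintype V] {M : ℕ} {v0 b0 : V}

/-- The free branch hanging from `b0` away from `v0`. -/
def BranchSet (G : SimpleGraph V) (v0 b0 : V) (M : ℕ) : Set V :=
  {x : V | G.dist b0 x ≤ 2 * M - 1 ∧ G.dist v0 x = G.dist b0 x + 1}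

lemma b0_mem_branch (hM : 1 ≤ M) (hvb : G.Adj v0 b0) : b0 ∈ BranchSet G v0 b0 M := by
  constructor
  · simp only [SimpleGraph.dist_self]; omega
  · rw [SimpleGraph.dist_self, SimpleGraph.dist_eq_one_iff_adj]; exact hvb

lemma branch_child (hconn : G.Connected) (hvb : G.Adj v0 b0) {x y : V}
    (hx : x ∈ BranchSet G v0 b0 M) (hdepth : G.dist v0 x ≤ 2 * M - 1)
    (hadj : G.Adj x y) (hy : G.dist v0 y = G.dist v0 x + 1) :
    y ∈ BranchSet G v0 b0 M := by
  obtain ⟨hx1, hx2⟩ := hx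
  have hvb1 : G.dist v0 b0 = 1 := SimpleGraph.dist_eq_one_iff_adj.mpr hvb
  have hxy : G.dist x y = 1 := SimpleGraph.dist_eq_one_iff_adj.mpr hadj
  have h1 : G.dist b0 y ≤ G.dist b0 x + 1 := by
    have := hconn.dist_triangle (u := b0) (v := x) (w := y); omega
  have h2 : G.dist v0 y ≤ G.dist v0 b0 + G.dist b0 y :=
    hconn.dist_triangle (u := v0) (v := b0) (w := y)
  constructor <;> omega

lemma branch_parent (hconn : G.Connected) (hvb : G.Adj v0 b0)
    (hT : (G.induce {x : V | G.dist v0 x ≤ 2 * M}).IsAcyclic) {x z : V} {t : ℕ}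
    (hx : x ∈ BranchSet G v0 b0 M) (hxd : G.dist v0 x = t + 1) (ht : 1 ≤ t)
    (htR : t + 1 ≤ 2 * M) (hadj : G.Adj x z) (hz : G.dist v0 z = t) :
    z ∈ BranchSet G v0 b0 M := by
  obtain ⟨hx1, hx2⟩ := hx
  have hvb1 : G.dist v0 b0 = 1 := SimpleGraph.dist_eq_one_iff_adj.mpr hvb
  -- b0-parent of x
  obtain ⟨w, hwadj, hw⟩ := parent_exists hconn (c := b0) (y := x) (by omega)
  have hwv : G.dist v0 w = t := by
    have h1 : G.dist v0 w ≤ G.dist v0 b0 + G.dist b0 w :=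
      hconn.dist_triangle (u := v0) (v := b0) (w := w)
    have h2 : G.dist v0 x ≤ G.dist v0 w + 1 := by
      have hxw : G.dist w x = 1 := SimpleGraph.dist_eq_one_iff_adj.mpr hwadj.symm
      have := hconn.dist_triangle (u := v0) (v := w) (w := x); omega
    omega
  have hzw : z = w :=
    unique_parent hconn hT hadj.symm hwadj.symm (by omega) (by omega) (by omega)
  subst hzw
  constructor <;> omega

end Branch

section Fdesc

attribute [local instance] Classical.propDecidable

variable [Fintype V] {d M : ℕ} {v0 b0 : V}
variable (hconn : G.Connected) (hreg : G.IsRegularOfDegree d)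
  (hT : (G.induce {x : V | G.dist v0 x ≤ 2 * M}).IsAcyclic)
  (hvb : G.Adj v0 b0) (hM : 1 ≤ M)

include hconn hreg hT hvb hM

lemma fdesc_spec : ∀ l : List (Fin (d - 1)), l.length + 1 ≤ M →
    fdesc G d v0 b0 l ∈ BranchSet G v0 b0 M ∧
      G.dist v0 (fdesc G d v0 b0 l) = l.length + 1 := by
  intro l
  induction l with
  | nil =>
      intro _
      refine ⟨b0_mem_branch hM hvb, ?_⟩
      show G.dist v0 b0 = 1
      exact SimpleGraph.dist_eq_one_iff_adj.mpr hvb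
  | cons a l ih =>
      intro hlen
      rw [List.length_cons] at hlen
      obtain ⟨hmem, hdist⟩ := ih (by omega)
      set x := fdesc G d v0 b0 l with hxdef
      have hcard : (children G v0 x).card = d - 1 :=
        card_children hconn hreg hT (by omega) (by omega)
      have hce := ce_mem_children hcard a
      rw [mem_children] at hce
      obtain ⟨hadj, hd2⟩ := hce
      refine ⟨?_, ?_⟩
      · show ce G d v0 x a ∈ BranchSet G v0 b0 M
        exact branch_child hconn hvb hmem (by omega) hadj (by omega)
      · show G.dist v0 (ce G d v0 x a) = l.length + 1 + 1
        omega

lemma fdesc_inj : ∀ l₁ l₂ : List (Fin (d - 1)), l₁.length + 1 ≤ M →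
    l₂.length + 1 ≤ M → fdesc G d v0 b0 l₁ = fdesc G d v0 b0 l₂ → l₁ = l₂ := by
  intro l₁
  induction l₁ with
  | nil =>
      intro l₂ h1 h2 heq
      obtain ⟨_, hd2⟩ := fdesc_spec hconn hreg hT hvb hM l₂ h2
      obtain ⟨_, hd1⟩ := fdesc_spec hconn hreg hT hvb hM [] h1
      rw [heq] at hd1
      have h0 : G.dist v0 (fdesc G d v0 b0 l₂) = 1 := by
        rw [hd1]; rfl
      have : l₂.length = 0 := by omega
      exact (List.eq_nil_of_length_eq_zero this).symm
  | cons a₁ l₁ ih =>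
      intro l₂ h1 h2 heq
      obtain ⟨hm1, hd1⟩ := fdesc_spec hconn hreg hT hvb hM _ h1
      obtain ⟨hm2, hd2⟩ := fdesc_spec hconn hreg hT hvb hM _ h2
      cases l₂ with
      | nil =>
          rw [heq] at hd1
          simp only [List.length_cons, List.length_nil] at hd1 hd2
          omega
      | cons a₂ l₂ =>
          rw [List.length_cons] at h1 h2 hd1 hd2
          obtain ⟨hm1', hd1'⟩ := fdesc_spec hconn hreg hT hvb hM l₁ (by omega)
          obtain ⟨hm2', hd2'⟩ := fdesc_spec hconn hreg hT hvb hM l₂ (by omega)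
          set x₁ := fdesc G d v0 b0 l₁ with hx₁
          set x₂ := fdesc G d v0 b0 l₂ with hx₂
          have hcard₁ : (children G v0 x₁).card = d - 1 :=
            card_children hconn hreg hT (by omega) (by omega)
          have hcard₂ : (children G v0 x₂).card = d - 1 :=
            card_children hconn hreg hT (by omega) (by omega)
          have hc₁ := ce_mem_children hcard₁ a₁
          have hc₂ := ce_mem_children hcard₂ a₂
          rw [mem_children] at hc₁ hc₂
          have heq' : ce G d v0 x₁ a₁ = ce G d v0 x₂ a₂ := heq
          -- lengths are equal
          have hlen : l₁.length = l₂.length := by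
            rw [show fdesc G d v0 b0 (a₁ :: l₁) = ce G d v0 x₁ a₁ from rfl] at hd1
            rw [show fdesc G d v0 b0 (a₂ :: l₂) = ce G d v0 x₂ a₂ from rfl] at hd2
            rw [heq'] at hd1
            omega
          have hxeq : x₁ = x₂ := by
            refine unique_parent hconn hT hc₁.1 ?_ ?_ ?_ ?_
            · rw [heq']; exact hc₂.1
            · omega
            · rw [heq']; omega
            · omega
          have hl : l₁ = l₂ := ih l₂ (by omega) (by omega) hxeq
          subst hl
          have : a₁ = a₂ := ce_inj hcard₁ heq'
          rw [this]

lemma fdesc_surj : ∀ n : ℕ, ∀ x ∈ BranchSet G v0 b0 M, G.dist v0 x = n + 1 →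
    n + 1 ≤ M → ∃ l : List (Fin (d - 1)), l.length = n ∧ fdesc G d v0 b0 l = x := by
  intro n
  induction n with
  | zero =>
      intro x hx hd1 _
      obtain ⟨hx1, hx2⟩ := hx
      have : G.dist b0 x = 0 := by omega
      have : b0 = x := (hconn b0 x).dist_eq_zero_iff.mp this
      exact ⟨[], rfl, this⟩
  | succ n ih =>
      intro x hx hd1 hn
      obtain ⟨z, hzadj, hzd⟩ := parent_exists hconn (c := v0) (y := x) (by omega)
      have hz : z ∈ BranchSet G v0 b0 M :=
        branch_parent (t := n + 1) hconn hvb hT hx (by omega) (by omega) (by omega)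
          hzadj (by omega)
      obtain ⟨l, hllen, hl⟩ := ih z hz (by omega) (by omega)
      have hcard : (children G v0 z).card = d - 1 :=
        card_children hconn hreg hT (by omega) (by omega)
      have hxmem : x ∈ children G v0 z := by
        rw [mem_children]
        exact ⟨hzadj.symm, by omega⟩
      obtain ⟨a, ha⟩ := ce_surj hcard hxmem
      refine ⟨a :: l, by simp [hllen], ?_⟩
      show ce G d v0 (fdesc G d v0 b0 l) a = x
      rw [hl, ha]

end Fdesc

section Iso

attribute [local instance] Classical.propDecidable

variable [Fintype V] {d M : ℕ} {v0 b0 : V}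

set_option maxHeartbeats 1000000 in
lemma iso_exists (hconn : G.Connected) (hreg : G.IsRegularOfDegree d)
    (hT : (G.induce {x : V | G.dist v0 x ≤ 2 * M}).IsAcyclic)
    (hvb : G.Adj v0 b0) (hM : 1 ≤ M) (Sb : Set V)
    (hSb : Sb = insert v0 {x : V | x ∈ BranchSet G v0 b0 M ∧ G.dist v0 x ≤ M}) :
    Nonempty ((G.induce Sb) ≃g DeltaGraph d M) := by
  subst hSb
  set s : Set V := insert v0 {x : V | x ∈ BranchSet G v0 b0 M ∧ G.dist v0 x ≤ M}
    with hsdef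
  have hval : ∀ l : List (Fin (d - 1)), l.length ≤ M - 1 →
      fdesc G d v0 b0 l ∈ BranchSet G v0 b0 M ∧
        G.dist v0 (fdesc G d v0 b0 l) = l.length + 1 :=
    fun l hl => fdesc_spec hconn hreg hT hvb hM l (by omega)
  have hmem : ∀ l : List (Fin (d - 1)), l.length ≤ M - 1 → fdesc G d v0 b0 l ∈ s := by
    intro l hl
    obtain ⟨h1, h2⟩ := hval l hl
    exact Set.mem_insert_iff.mpr (Or.inr ⟨h1, by omega⟩)
  -- the map
  set F : Option {l : List (Fin (d - 1)) // l.length ≤ M - 1} → ↥s :=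
    fun o => Option.rec ⟨v0, Set.mem_insert _ _⟩
      (fun l => ⟨fdesc G d v0 b0 l.1, hmem l.1 l.2⟩) o with hFdef
  have hFnone : (F none).val = v0 := rfl
  have hFsome : ∀ l : {l : List (Fin (d - 1)) // l.length ≤ M - 1},
      (F (some l)).val = fdesc G d v0 b0 l.1 := fun _ => rfl
  -- bijectivity
  have hFinj : Function.Injective F := by
    intro o₁ o₂ h
    have h' : (F o₁).val = (F o₂).val := congrArg Subtype.val h
    match o₁, o₂ with
    | none, none => rfl
    | none, some l =>
        exfalso
        rw [hFnone, hFsome] at h'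
        have := (hval l.1 l.2).2
        rw [← h'] at this
        rw [SimpleGraph.dist_self] at this
        omega
    | some l, none =>
        exfalso
        rw [hFnone, hFsome] at h'
        have := (hval l.1 l.2).2
        rw [h'] at this
        rw [SimpleGraph.dist_self] at this
        omega
    | some l₁, some l₂ =>
        rw [hFsome, hFsome] at h'
        have := fdesc_inj hconn hreg hT hvb hM l₁.1 l₂.1
          (by have := l₁.2; omega) (by have := l₂.2; omega) h'
        exact congrArg some (Subtype.ext this)
  have hFsurj : Function.Surjective F := by
    rintro ⟨x, hx⟩
    rcases Set.mem_insert_iff.mp hx with rfl | ⟨hxb, hxM⟩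
    · exact ⟨none, rfl⟩
    · obtain ⟨hx1, hx2⟩ := hxb
      obtain ⟨l, hllen, hl⟩ := fdesc_surj hconn hreg hT hvb hM (G.dist b0 x) x
        ⟨hx1, hx2⟩ (by omega) (by omega)
      exact ⟨some ⟨l, by omega⟩, Subtype.ext (by rw [hFsome]; exact hl)⟩
  -- adjacency transfer
  have hcard : ∀ l : List (Fin (d - 1)), l.length ≤ M - 1 →
      (children G v0 (fdesc G d v0 b0 l)).card = d - 1 := by
    intro l hl
    obtain ⟨h1, h2⟩ := hval l hl
    exact card_children hconn hreg hT (by omega) (by omega)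
  -- child adjacency
  have hadj_cons : ∀ (a : Fin (d - 1)) (l : List (Fin (d - 1))), l.length ≤ M - 1 →
      G.Adj (fdesc G d v0 b0 l) (fdesc G d v0 b0 (a :: l)) := by
    intro a l hl
    have := ce_mem_children (hcard l hl) a
    rw [mem_children] at this
    exact this.1
  -- adjacency forces the parent relation
  have hparent : ∀ (l₁ l₂ : List (Fin (d - 1))), l₁.length ≤ M - 1 →
      l₂.length ≤ M - 1 → G.Adj (fdesc G d v0 b0 l₁) (fdesc G d v0 b0 l₂) →
      l₂.length = l₁.length + 1 → ∃ a : Fin (d - 1), l₂ = a :: l₁ := by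
    intro l₁ l₂ h₁ h₂ hadj hlen
    cases l₂ with
    | nil => simp at hlen
    | cons a l₂' =>
        refine ⟨a, ?_⟩
        have hmem2 := ce_mem_children (hcard l₂' (by simp at h₂; omega)) a
        rw [mem_children] at hmem2
        have hd1 := (hval l₁ h₁).2
        have hd2' := (hval l₂' (by simp at h₂; omega)).2
        have hd2 := (hval (a :: l₂') h₂).2
        have : fdesc G d v0 b0 l₁ = fdesc G d v0 b0 l₂' := by
          refine unique_parent hconn hT (y := fdesc G d v0 b0 (a :: l₂')) hadj
            hmem2.1 ?_ ?_ ?_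
          · simp only [List.length_cons] at hd2 hlen; omega
          · show G.dist v0 (fdesc G d v0 b0 l₂') + 1
              = G.dist v0 (ce G d v0 (fdesc G d v0 b0 l₂') a)
            omega
          · simp only [List.length_cons] at hd2 h₂; omega
        have := fdesc_inj hconn hreg hT hvb hM l₁ l₂'
          (by simp only [List.length_cons] at hlen; omega) (by simp at h₂; omega) this
        rw [this]
  -- the Delta adjacency in usable form
  have hDelta : ∀ o₁ o₂ : Option {l : List (Fin (d - 1)) // l.length ≤ M - 1},
      (DeltaGraph d M).Adj o₁ o₂ ↔
        ((∃ l₂ : {l : List (Fin (d - 1)) // l.length ≤ M - 1},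
            o₁ = none ∧ o₂ = some l₂ ∧ l₂.1 = []) ∨
         (∃ l₁ : {l : List (Fin (d - 1)) // l.length ≤ M - 1},
            o₂ = none ∧ o₁ = some l₁ ∧ l₁.1 = []) ∨
         (∃ (a : Fin (d - 1)) (l₁ l₂ : {l : List (Fin (d - 1)) // l.length ≤ M - 1}),
            o₁ = some l₁ ∧ o₂ = some l₂ ∧ l₂.1 = a :: l₁.1) ∨
         (∃ (a : Fin (d - 1)) (l₁ l₂ : {l : List (Fin (d - 1)) // l.length ≤ M - 1}),
            o₁ = some l₁ ∧ o₂ = some l₂ ∧ l₁.1 = a :: l₂.1)) := by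
    intro o₁ o₂
    rw [DeltaGraph]; refine (SimpleGraph.fromRel_adj (V := Option {l : List (Fin (d - 1)) // l.length ≤ M - 1}) ..).trans ?_
    constructor
    · rintro ⟨hne, (⟨rfl, hh, rfl⟩ | ⟨a, l, hh1, hh2, rfl, rfl⟩) |
        (⟨rfl, hh, rfl⟩ | ⟨a, l, hh1, hh2, rfl, rfl⟩)⟩
      · exact Or.inl ⟨⟨[], hh⟩, rfl, rfl, rfl⟩
      · exact Or.inr (Or.inr (Or.inl ⟨a, ⟨l, hh1⟩, ⟨a :: l, hh2⟩, rfl, rfl, rfl⟩))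
      · exact Or.inr (Or.inl ⟨⟨[], hh⟩, rfl, rfl, rfl⟩)
      · exact Or.inr (Or.inr (Or.inr ⟨a, ⟨a :: l, hh2⟩, ⟨l, hh1⟩, rfl, rfl, rfl⟩))
    · rintro (⟨⟨l₂, hl₂⟩, rfl, rfl, rfl⟩ | ⟨⟨l₁, hl₁⟩, rfl, rfl, rfl⟩ |
        ⟨a, ⟨l₁, hl₁⟩, ⟨l₂, hl₂⟩, rfl, rfl, h⟩ | ⟨a, ⟨l₁, hl₁⟩, ⟨l₂, hl₂⟩, rfl, rfl, h⟩)
      · exact ⟨by simp, Or.inl (Or.inl ⟨rfl, hl₂, rfl⟩)⟩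
      · exact ⟨by simp, Or.inr (Or.inl ⟨rfl, hl₁, rfl⟩)⟩
      · dsimp only at h
        subst h
        refine ⟨?_, Or.inl (Or.inr ⟨a, l₁, hl₁, hl₂, rfl, rfl⟩)⟩
        intro hco
        rw [Option.some.injEq, Subtype.mk.injEq] at hco
        exact absurd (congrArg List.length hco) (by simp)
      · dsimp only at h
        subst h
        refine ⟨?_, Or.inr (Or.inr ⟨a, l₂, hl₂, hl₁, rfl, rfl⟩)⟩
        intro hco
        rw [Option.some.injEq, Subtype.mk.injEq] at hco
        exact absurd (congrArg List.length hco) (by simp)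
  -- the key adjacency equivalence
  have hAdj : ∀ o₁ o₂ : Option {l : List (Fin (d - 1)) // l.length ≤ M - 1},
      G.Adj (F o₁).val (F o₂).val ↔ (DeltaGraph d M).Adj o₁ o₂ := by
    have key : ∀ o₁ o₂, G.Adj (F o₁).val (F o₂).val → (DeltaGraph d M).Adj o₁ o₂ := by
      intro o₁ o₂ hadj
      rw [hDelta]
      match o₁, o₂ with
      | none, none => exact absurd hadj (G.irrefl)
      | none, some ⟨l, hl⟩ =>
          rw [hFnone, hFsome] at hadj
          have hd := (hval l hl).2
          have h1 : G.dist v0 (fdesc G d v0 b0 l) = 1 :=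
            SimpleGraph.dist_eq_one_iff_adj.mpr hadj
          have : l.length = 0 := by omega
          exact Or.inl ⟨⟨l, hl⟩, rfl, rfl, List.eq_nil_of_length_eq_zero this⟩
      | some ⟨l, hl⟩, none =>
          rw [hFnone, hFsome] at hadj
          have hd := (hval l hl).2
          have h1 : G.dist v0 (fdesc G d v0 b0 l) = 1 :=
            SimpleGraph.dist_eq_one_iff_adj.mpr hadj.symm
          have : l.length = 0 := by omega
          exact Or.inr (Or.inl ⟨⟨l, hl⟩, rfl, rfl, List.eq_nil_of_length_eq_zero this⟩)
      | some ⟨l₁, hl₁⟩, some ⟨l₂, hl₂⟩ =>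
          rw [hFsome, hFsome] at hadj
          replace hadj : G.Adj (fdesc G d v0 b0 l₁) (fdesc G d v0 b0 l₂) := hadj
          have hd1 := (hval l₁ hl₁).2
          have hd2 := (hval l₂ hl₂).2
          have hne : G.dist v0 (fdesc G d v0 b0 l₁) ≠ G.dist v0 (fdesc G d v0 b0 l₂) := by
            intro heq
            exact no_horizontal hconn hT hadj heq (by omega)
          have htri1 : G.dist v0 (fdesc G d v0 b0 l₂)
              ≤ G.dist v0 (fdesc G d v0 b0 l₁) + 1 := by
            have hxy : G.dist (fdesc G d v0 b0 l₁) (fdesc G d v0 b0 l₂) = 1 :=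
              SimpleGraph.dist_eq_one_iff_adj.mpr hadj
            have := hconn.dist_triangle (u := v0) (v := fdesc G d v0 b0 l₁)
              (w := fdesc G d v0 b0 l₂)
            omega
          have htri2 : G.dist v0 (fdesc G d v0 b0 l₁)
              ≤ G.dist v0 (fdesc G d v0 b0 l₂) + 1 := by
            have hxy : G.dist (fdesc G d v0 b0 l₂) (fdesc G d v0 b0 l₁) = 1 :=
              SimpleGraph.dist_eq_one_iff_adj.mpr hadj.symm
            have := hconn.dist_triangle (u := v0) (v := fdesc G d v0 b0 l₂)
              (w := fdesc G d v0 b0 l₁)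
            omega
          rcases Nat.lt_or_ge l₁.length l₂.length with hlt | hge
          · obtain ⟨a, ha⟩ := hparent l₁ l₂ hl₁ hl₂ hadj (by omega)
            exact Or.inr (Or.inr (Or.inl ⟨a, ⟨l₁, hl₁⟩, ⟨l₂, hl₂⟩, rfl, rfl, ha⟩))
          · obtain ⟨a, ha⟩ := hparent l₂ l₁ hl₂ hl₁ hadj.symm (by omega)
            exact Or.inr (Or.inr (Or.inr ⟨a, ⟨l₁, hl₁⟩, ⟨l₂, hl₂⟩, rfl, rfl, ha⟩))
    intro o₁ o₂
    constructor
    · exact key o₁ o₂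
    · intro h
      rw [hDelta] at h
      rcases h with ⟨⟨l₂, hl₂⟩, rfl, rfl, h⟩ | ⟨⟨l₁, hl₁⟩, rfl, rfl, h⟩ |
          ⟨a, ⟨l₁, hl₁⟩, ⟨l₂, hl₂⟩, rfl, rfl, h⟩ | ⟨a, ⟨l₁, hl₁⟩, ⟨l₂, hl₂⟩, rfl, rfl, h⟩
      · dsimp only at h; subst h
        rw [hFnone, hFsome]
        exact hvb
      · dsimp only at h; subst h
        rw [hFnone, hFsome]
        exact hvb.symm
      · dsimp only at h; subst h
        rw [hFsome, hFsome]
        exact hadj_cons a l₁ hl₁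
      · dsimp only at h; subst h
        rw [hFsome, hFsome]
        exact (hadj_cons a l₂ hl₂).symm
  -- assemble
  refine ⟨SimpleGraph.Iso.symm ⟨Equiv.ofBijective F ⟨hFinj, hFsurj⟩, ?_⟩⟩
  intro o₁ o₂
  rw [SimpleGraph.comap_adj]
  exact hAdj o₁ o₂

end Iso

end Stmt18Aux

open Classical in
/-- Black vertices v i of U, each with a free branch of depth 2M (hanging from the
neighbor b i, containing no vertex of U) inside a tree-like 2M-neighborhood of a
d-regular graph: the depth-M parts of these branches together with their roots v i
are pairwise vertex-disjoint and each induces a copy of Δ_M. -/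
theorem stmt_18 {V : Type*} [Fintype V] (G : SimpleGraph V) (hconn : G.Connected)
    (d M : ℕ) (hd : 3 ≤ d) (hM : 1 ≤ M)
    (hreg : G.IsRegularOfDegree d)
    (U : Finset V) (k : ℕ) (v : Fin k → V) (hinj : Function.Injective v)
    (hvU : ∀ i, v i ∈ U)
    (htree : ∀ i, (G.induce {x : V | G.dist (v i) x ≤ 2 * M}).IsAcyclic)
    (b : Fin k → V) (hb : ∀ i, G.Adj (v i) (b i))
    (Branch : Fin k → Set V)
    (hBranch : ∀ i, Branch i =
      {x : V | G.dist (b i) x ≤ 2 * M - 1 ∧ G.dist (v i) x = G.dist (b i) x + 1})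
    (hfree : ∀ i, ∀ u ∈ U, (u : V) ∉ Branch i)
    (Sub : Fin k → Set V)
    (hSub : ∀ i, Sub i = insert (v i) {x : V | x ∈ Branch i ∧ G.dist (v i) x ≤ M}) :
    (∀ i j, i ≠ j → Disjoint (Sub i) (Sub j)) ∧
      ∀ i, Nonempty ((G.induce (Sub i)) ≃g DeltaGraph d M) := by
  classical
  have hBr : ∀ i, Branch i = Stmt18Aux.BranchSet G (v i) (b i) M := fun i => hBranch i
  -- the inductive core of the disjointness argument
  have core : ∀ n : ℕ, ∀ i j : Fin k, i ≠ j → ∀ x : V,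
      x ∈ Stmt18Aux.BranchSet G (v i) (b i) M →
      x ∈ Stmt18Aux.BranchSet G (v j) (b j) M →
      G.dist (v i) x + n ≤ 2 * M → G.dist (v j) x = n → n ≤ M → False := by
    intro n
    induction n using Nat.strong_induction_on with
    | _ n ih =>
      intro i j hij x hxi hxj hsum hdj hnM
      have hn1 : 1 ≤ n := by
        obtain ⟨h1, h2⟩ := hxj; omega
      have hdi_pos : 1 ≤ G.dist (v i) x := by
        obtain ⟨h1, h2⟩ := hxi; omega
      -- step towards v j
      obtain ⟨z, hzadj, hzd⟩ := Stmt18Aux.parent_exists hconn (c := v j) (y := x)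
        (by omega)
      -- relation of z to the branch of i
      have htri1 : G.dist (v i) z ≤ G.dist (v i) x + 1 := by
        have hxz : G.dist x z = 1 := SimpleGraph.dist_eq_one_iff_adj.mpr hzadj
        have := hconn.dist_triangle (u := v i) (v := x) (w := z); omega
      have htri2 : G.dist (v i) x ≤ G.dist (v i) z + 1 := by
        have hzx : G.dist z x = 1 := SimpleGraph.dist_eq_one_iff_adj.mpr hzadj.symm
        have := hconn.dist_triangle (u := v i) (v := z) (w := x); omega
      have hne : G.dist (v i) z ≠ G.dist (v i) x := by
        intro heq
        exact Stmt18Aux.no_horizontal hconn (htree i) hzadj.symm heq (by omega)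
      have hzi : z ∈ Stmt18Aux.BranchSet G (v i) (b i) M ∨ z = v i := by
        rcases Nat.lt_or_ge (G.dist (v i) x) (G.dist (v i) z) with hup | hdown
        · -- z is a child of x in the branch of i
          left
          exact Stmt18Aux.branch_child hconn (hb i) hxi (by omega) hzadj (by omega)
        · -- z is the parent of x
          rcases Nat.eq_or_lt_of_le hdi_pos with h1 | h1
          · -- x at distance 1 from v i, so z = v i
            right
            have : G.dist (v i) z = 0 := by omega
            exact ((hconn (v i) z).dist_eq_zero_iff.mp this).symm
          · left
            exact Stmt18Aux.branch_parent (t := G.dist (v i) x - 1) hconn (hb i)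
              (htree i) hxi (by omega) (by omega) (by omega) hzadj (by omega)
      have hzj : z ∈ Stmt18Aux.BranchSet G (v j) (b j) M ∨ z = v j := by
        rcases Nat.eq_or_lt_of_le hn1 with h1 | h1
        · right
          have : G.dist (v j) z = 0 := by omega
          exact ((hconn (v j) z).dist_eq_zero_iff.mp this).symm
        · left
          exact Stmt18Aux.branch_parent (t := n - 1) hconn (hb j) (htree j) hxj
            (by omega) (by omega) (by omega) hzadj (by omega)
      rcases hzi with hzi | rfl
      · rcases hzj with hzj | rfl
        · exact ih (n - 1) (by omega) i j hij z hzi hzj (by omega) (by omega) (by omega)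
        · exact hfree i (v j) (hvU j) ((hBr i) ▸ hzi)
      · rcases hzj with hzj | hvij
        · exact hfree j (v i) (hvU i) ((hBr j) ▸ hzj)
        · exact hij (hinj hvij)
  constructor
  · -- disjointness
    intro i j hij
    rw [Set.disjoint_left]
    intro x hxi hxj
    rw [hSub i] at hxi
    rw [hSub j] at hxj
    rcases Set.mem_insert_iff.mp hxi with rfl | ⟨hxbi, hxMi⟩
    · rcases Set.mem_insert_iff.mp hxj with heq | ⟨hxbj, _⟩
      · exact hij (hinj heq)
      · exact hfree j (v i) (hvU i) hxbj
    · rcases Set.mem_insert_iff.mp hxj with rfl | ⟨hxbj, hxMj⟩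
      · exact hfree i (v j) (hvU j) hxbi
      · exact core (G.dist (v j) x) i j hij x ((hBr i) ▸ hxbi) ((hBr j) ▸ hxbj)
          (by omega) rfl (by omega)
  · -- the isomorphisms
    intro i
    refine Stmt18Aux.iso_exists hconn hreg (htree i) (hb i) hM (Sub i) ?_
    rw [hSub i, hBr i]
end
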